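/- Let 𝒳 and 𝒳̂ be finite nonempty alphabets and let X₁,…,Xₙ be i.i.d. random variables with values in 𝒳. Let e : 𝒳ⁿ → Fin N be an encoder and for each i let gᵢ : Fin N × 𝒳^{i−1} → 𝒳̂ be a decoder; set M = e(X₁,…,Xₙ) and X̂ᵢ = gᵢ(M, X₁,…,X_{i−1}). Then log N ≥ Σ_{i=1}^n ( H[Xᵢ] − H[Xᵢ | X̂ᵢ] ), i.e. log N ≥ Σ_{i=1}^n I[Xᵢ ; X̂ᵢ]. -/

import Mathlib

open MeasureTheory

namespace FFAux

open Finset Real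

variable {V : Type*} [Fintype V]

/-- Mass that `q` assigns to the fiber of `F` over `t`. -/
noncomputable def pmass {T : Type*} [DecidableEq T] (q : V → ℝ) (F : V → T) (t : T) : ℝ :=
  ∑ x ∈ univ.filter (fun x => F x = t), q x

/-- Entropy of the push-forward of `q` under `F`. -/
noncomputable def ent {T : Type*} [Fintype T] [DecidableEq T] (q : V → ℝ) (F : V → T) : ℝ :=
  ∑ t, Real.negMulLog (pmass q F t)

lemma pmass_nonneg {T : Type*} [DecidableEq T] {q : V → ℝ} (hq : ∀ x, 0 ≤ q x)
    (F : V → T) (t : T) : 0 ≤ pmass q F t :=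
  Finset.sum_nonneg fun x _ => hq x

lemma sum_pmass {T : Type*} [Fintype T] [DecidableEq T] (q : V → ℝ) (F : V → T) :
    ∑ t, pmass q F t = ∑ x, q x :=
  Finset.sum_fiberwise univ F q

lemma pmass_comp {T T' : Type*} [Fintype T] [DecidableEq T] [DecidableEq T']
    (q : V → ℝ) (F : V → T) (h : T → T') (t' : T') :
    pmass q (fun x => h (F x)) t' = ∑ t ∈ univ.filter (fun t => h t = t'), pmass q F t := by
  rw [pmass, Finset.sum_filter, Finset.sum_filter]
  have key : ∀ t : T, (if h t = t' then pmass q F t else 0)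
      = ∑ x ∈ univ.filter (fun x => F x = t), (if h (F x) = t' then q x else 0) := by
    intro t
    split_ifs with hht
    · rw [pmass]
      refine Finset.sum_congr rfl fun x hx => ?_
      rw [Finset.mem_filter] at hx
      rw [if_pos (by rw [hx.2]; exact hht)]
    · symm
      refine Finset.sum_eq_zero fun x hx => ?_
      rw [Finset.mem_filter] at hx
      rw [if_neg (by rw [hx.2]; exact hht)]
  rw [Finset.sum_congr rfl fun t _ => key t,
    Finset.sum_fiberwise univ F (fun x => if h (F x) = t' then q x else 0)]

lemma pmass_eq_zero_of_not_mem_image {T : Type*} [DecidableEq T] {q : V → ℝ} {F : V → T} {t : T}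
    (ht : t ∉ univ.image F) : pmass q F t = 0 := by
  rw [pmass]
  refine Finset.sum_eq_zero fun x hx => ?_
  rw [Finset.mem_filter] at hx
  exact absurd (Finset.mem_image.2 ⟨x, Finset.mem_univ x, hx.2⟩) ht

lemma ent_eq_sum_image {T : Type*} [Fintype T] [DecidableEq T] (q : V → ℝ) (F : V → T) :
    ent q F = ∑ t ∈ univ.image F, Real.negMulLog (pmass q F t) := by
  rw [ent]
  symm
  refine Finset.sum_subset (Finset.subset_univ _) fun t _ ht => ?_
  rw [pmass_eq_zero_of_not_mem_image ht, Real.negMulLog_zero]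

/-- Entropy is invariant under composition with a map injective on the range. -/
lemma ent_comp_of_injOn {T T' : Type*} [Fintype T] [Fintype T'] [DecidableEq T] [DecidableEq T']
    (q : V → ℝ) (F : V → T) (f : T → T') (hf : Set.InjOn f (Set.range F)) :
    ent q (fun x => f (F x)) = ent q F := by
  rw [ent_eq_sum_image q (fun x => f (F x)), ent_eq_sum_image q F]
  have himg : univ.image (fun x => f (F x)) = (univ.image F).image f := by
    rw [Finset.image_image]; rfl
  rw [himg]
  have hinj : ∀ t ∈ univ.image F, ∀ t'' ∈ univ.image F, f t = f t'' → t = t'' := by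
    intro t ht t'' ht'' hfe
    rw [Finset.mem_image] at ht ht''
    obtain ⟨x, _, rfl⟩ := ht
    obtain ⟨y, _, rfl⟩ := ht''
    exact hf ⟨x, rfl⟩ ⟨y, rfl⟩ hfe
  rw [Finset.sum_image hinj]
  refine Finset.sum_congr rfl fun t ht => ?_
  congr 1
  rw [pmass, pmass]
  refine Finset.sum_congr ?_ fun _ _ => rfl
  ext x
  simp only [Finset.mem_filter, Finset.mem_univ, true_and]
  constructor
  · intro hx
    rw [Finset.mem_image] at ht
    obtain ⟨y, _, rfl⟩ := ht
    exact hf ⟨x, rfl⟩ ⟨y, rfl⟩ hx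
  · intro hx; rw [hx]

/-- The log-sum inequality. -/
lemma sum_mul_log_div_le {ι : Type*} (s : Finset ι) (a b : ι → ℝ)
    (ha : ∀ i ∈ s, 0 ≤ a i) (hb : ∀ i ∈ s, 0 ≤ b i) (hab : ∀ i ∈ s, b i = 0 → a i = 0) :
    ∑ i ∈ s, a i * Real.log (b i / a i)
      ≤ (∑ i ∈ s, a i) * Real.log ((∑ i ∈ s, b i) / (∑ i ∈ s, a i)) := by
  set A := ∑ i ∈ s, a i with hA_def
  set B := ∑ i ∈ s, b i with hB_def
  by_cases hA : A = 0
  · have h0 : ∀ i ∈ s, a i = 0 := (Finset.sum_eq_zero_iff_of_nonneg ha).1 hA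
    have : ∑ i ∈ s, a i * Real.log (b i / a i) = 0 :=
      Finset.sum_eq_zero fun i hi => by rw [h0 i hi, zero_mul]
    rw [this, hA, zero_mul]
  have hApos : 0 < A := lt_of_le_of_ne (Finset.sum_nonneg ha) (Ne.symm hA)
  have hBpos : 0 < B := by
    rcases lt_or_eq_of_le (Finset.sum_nonneg hb) with h | h
    · exact h
    · exfalso
      apply hA
      refine Finset.sum_eq_zero fun i hi => hab i hi ?_
      exact (Finset.sum_eq_zero_iff_of_nonneg hb).1 h.symm i hi
  have key : ∀ i ∈ s, a i * Real.log (b i / a i) - a i * Real.log (B / A)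
      ≤ A / B * b i - a i := by
    intro i hi
    by_cases hai : a i = 0
    · rw [hai, zero_mul, zero_mul, sub_zero, sub_zero]
      exact mul_nonneg (by positivity) (hb i hi)
    · have hai' : 0 < a i := lt_of_le_of_ne (ha i hi) (Ne.symm hai)
      have hbi : 0 < b i := by
        rcases lt_or_eq_of_le (hb i hi) with h | h
        · exact h
        · exact absurd (hab i hi h.symm) hai
      have h1 : Real.log (b i / a i) - Real.log (B / A)
          = Real.log ((b i * A) / (a i * B)) := by
        rw [Real.log_div hbi.ne' hai'.ne', Real.log_div hBpos.ne' hApos.ne',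
          Real.log_div (by positivity) (by positivity),
          Real.log_mul hbi.ne' hApos.ne', Real.log_mul hai'.ne' hBpos.ne']
        ring
      have h2 : Real.log ((b i * A) / (a i * B)) ≤ (b i * A) / (a i * B) - 1 :=
        Real.log_le_sub_one_of_pos (by positivity)
      calc a i * Real.log (b i / a i) - a i * Real.log (B / A)
          = a i * Real.log ((b i * A) / (a i * B)) := by rw [← mul_sub, h1]
        _ ≤ a i * ((b i * A) / (a i * B) - 1) :=
            mul_le_mul_of_nonneg_left h2 hai'.le
        _ = A / B * b i - a i := by field_simp
  have hsum := Finset.sum_le_sum key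
  have hL : ∑ i ∈ s, (a i * Real.log (b i / a i) - a i * Real.log (B / A))
      = (∑ i ∈ s, a i * Real.log (b i / a i)) - A * Real.log (B / A) := by
    rw [Finset.sum_sub_distrib, ← Finset.sum_mul]
  have hR : ∑ i ∈ s, (A / B * b i - a i) = 0 := by
    rw [Finset.sum_sub_distrib, ← Finset.mul_sum, ← hB_def, ← hA_def]
    field_simp
    ring
  rw [hL, hR] at hsum
  linarith

lemma negMulLog_add_identity {a b : ℝ} (ha : 0 ≤ a) (hb : 0 ≤ b) :
    Real.negMulLog a + Real.negMulLog b - Real.negMulLog (a + b)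
      = a * Real.log ((a + b) / a) + b * Real.log ((a + b) / b) := by
  rcases eq_or_lt_of_le ha with ha0 | ha0
  · rcases eq_or_lt_of_le hb with hb0 | hb0
    · rw [← ha0, ← hb0]; simp
    · rw [← ha0]
      simp [Real.negMulLog_zero, zero_add, zero_mul, div_self hb0.ne', Real.log_one, mul_zero]
  rcases eq_or_lt_of_le hb with hb0 | hb0
  · rw [← hb0]
    simp [Real.negMulLog_zero, add_zero, zero_mul, div_self ha0.ne', Real.log_one, mul_zero]
  have hab : 0 < a + b := by linarith
  rw [Real.log_div hab.ne' ha0.ne', Real.log_div hab.ne' hb0.ne']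
  simp only [Real.negMulLog]
  ring

/-- `φ w = ∑ negMulLog (w s) - negMulLog (∑ w s)`, the "unnormalized entropy". -/
noncomputable def phi {S : Type*} [Fintype S] (w : S → ℝ) : ℝ :=
  (∑ s, Real.negMulLog (w s)) - Real.negMulLog (∑ s, w s)

lemma phi_superadd {S : Type*} [Fintype S] (u v : S → ℝ)
    (hu : ∀ s, 0 ≤ u s) (hv : ∀ s, 0 ≤ v s) :
    phi u + phi v ≤ phi (fun s => u s + v s) := by
  set U := ∑ s, u s with hU
  set Vv := ∑ s, v s with hV
  have hU0 : 0 ≤ U := Finset.sum_nonneg fun s _ => hu s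
  have hV0 : 0 ≤ Vv := Finset.sum_nonneg fun s _ => hv s
  have hUV : ∑ s, (u s + v s) = U + Vv := Finset.sum_add_distrib
  have h1 : ∑ s, (Real.negMulLog (u s) + Real.negMulLog (v s)
        - Real.negMulLog (u s + v s))
      = ∑ s, (u s * Real.log ((u s + v s) / u s))
        + ∑ s, (v s * Real.log ((u s + v s) / v s)) := by
    rw [← Finset.sum_add_distrib]
    exact Finset.sum_congr rfl fun s _ => negMulLog_add_identity (hu s) (hv s)
  have h2 := sum_mul_log_div_le univ u (fun s => u s + v s)
    (fun s _ => hu s) (fun s _ => by have := hu s; have := hv s; linarith)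
    (fun s _ hs => by have := hu s; have := hv s; linarith)
  have h3 := sum_mul_log_div_le univ v (fun s => u s + v s)
    (fun s _ => hv s) (fun s _ => by have := hu s; have := hv s; linarith)
    (fun s _ hs => by have := hu s; have := hv s; linarith)
  rw [hUV, ← hU] at h2
  rw [hUV, ← hV] at h3
  have h4 : Real.negMulLog U + Real.negMulLog Vv - Real.negMulLog (U + Vv)
      = U * Real.log ((U + Vv) / U) + Vv * Real.log ((U + Vv) / Vv) :=
    negMulLog_add_identity hU0 hV0
  have e1 : ∑ s, (Real.negMulLog (u s) + Real.negMulLog (v s)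
        - Real.negMulLog (u s + v s))
      = (∑ s, Real.negMulLog (u s)) + (∑ s, Real.negMulLog (v s))
        - ∑ s, Real.negMulLog (u s + v s) := by
    rw [Finset.sum_sub_distrib, Finset.sum_add_distrib]
  simp only [phi, hUV]
  rw [← hU, ← hV]
  linarith [h1, e1]

lemma phi_sum_le {S ι : Type*} [Fintype S] (A : Finset ι) (w : ι → S → ℝ)
    (hw : ∀ i ∈ A, ∀ s, 0 ≤ w i s) :
    ∑ i ∈ A, phi (w i) ≤ phi (fun s => ∑ i ∈ A, w i s) := by
  classical
  induction A using Finset.induction_on with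
  | empty => simp [phi]
  | @insert a A ha ih =>
    rw [Finset.sum_insert ha]
    have hws : (fun s => ∑ i ∈ insert a A, w i s)
        = fun s => w a s + ∑ i ∈ A, w i s :=
      funext fun s => Finset.sum_insert ha
    rw [hws]
    have hA : ∀ i ∈ A, ∀ s, 0 ≤ w i s := fun i hi => hw i (Finset.mem_insert_of_mem hi)
    calc phi (w a) + ∑ i ∈ A, phi (w i)
        ≤ phi (w a) + phi (fun s => ∑ i ∈ A, w i s) := by linarith [ih hA]
      _ ≤ phi (fun s => w a s + ∑ i ∈ A, w i s) :=
          phi_superadd _ _ (hw a (Finset.mem_insert_self a A))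
            (fun s => Finset.sum_nonneg fun i hi => hA i hi s)

/-- Marginal: mass of `G`-fiber equals sum over the first coordinate of pair masses. -/
lemma pmass_snd {S T : Type*} [Fintype S] [Fintype T] [DecidableEq S] [DecidableEq T]
    (q : V → ℝ) (F : V → S) (G : V → T) (t : T) :
    pmass q G t = ∑ s, pmass q (fun x => (F x, G x)) (s, t) := by
  have h : pmass q G t
      = ∑ st ∈ univ.filter (fun st : S × T => st.2 = t),
          pmass q (fun x => (F x, G x)) st :=
    pmass_comp q (fun x => (F x, G x)) Prod.snd t
  rw [h, Finset.sum_filter, Fintype.sum_prod_type]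
  refine Finset.sum_congr rfl fun s _ => ?_
  rw [Finset.sum_ite_eq' univ t (fun t' => pmass q (fun x => (F x, G x)) (s, t'))]
  simp

lemma pmass_map_snd {S T U' : Type*} [Fintype S] [Fintype T]
    [DecidableEq S] [DecidableEq T] [DecidableEq U'] (q : V → ℝ)
    (F : V → S) (G : V → T) (h : T → U') (s : S) (u : U') :
    pmass q (fun x => (F x, h (G x))) (s, u)
      = ∑ t ∈ univ.filter (fun t => h t = u), pmass q (fun x => (F x, G x)) (s, t) := by
  rw [pmass, Finset.sum_filter, Finset.sum_filter]
  have key : ∀ t : T, (if h t = u then pmass q (fun x => (F x, G x)) (s, t) else 0)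
      = ∑ x ∈ univ.filter (fun x => G x = t),
          (if (F x, h (G x)) = (s, u) then q x else 0) := by
    intro t
    rw [Finset.sum_filter]
    split_ifs with hht
    · rw [pmass, Finset.sum_filter]
      refine Finset.sum_congr rfl fun x _ => ?_
      by_cases hG : G x = t
      · simp [hG, Prod.ext_iff, hht]
      · simp [hG, Prod.ext_iff]
    · symm
      refine Finset.sum_eq_zero fun x _ => ?_
      by_cases hG : G x = t
      · simp [hG, Prod.ext_iff, hht]
      · simp [hG]
  rw [Finset.sum_congr rfl fun t _ => key t,
    Finset.sum_fiberwise univ G (fun x => if (F x, h (G x)) = (s, u) then q x else 0)]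

lemma ent_pair_eq {S T : Type*} [Fintype S] [Fintype T] [DecidableEq S] [DecidableEq T]
    (q : V → ℝ) (F : V → S) (G : V → T) :
    ent q (fun x => (F x, G x))
      = ∑ t, ∑ s, Real.negMulLog (pmass q (fun x => (F x, G x)) (s, t)) := by
  rw [ent, Fintype.sum_prod_type, Finset.sum_comm]

/-- Conditioning on a function of `G` gives smaller mutual information
(data processing / conditioning reduces entropy). -/
lemma condEnt_le_condEnt_comp {S T U' : Type*} [Fintype S] [Fintype T] [Fintype U']
    [DecidableEq S] [DecidableEq T] [DecidableEq U']
    (q : V → ℝ) (hq : ∀ x, 0 ≤ q x) (F : V → S) (G : V → T) (h : T → U') :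
    ent q (fun x => (F x, G x)) - ent q G
      ≤ ent q (fun x => (F x, h (G x))) - ent q (fun x => h (G x)) := by
  set r : S × T → ℝ := pmass q (fun x => (F x, G x)) with hr
  have hr0 : ∀ st, 0 ≤ r st := fun st => pmass_nonneg hq _ st
  have hG : ent q G = ∑ t, Real.negMulLog (∑ s, r (s, t)) := by
    rw [ent]
    exact Finset.sum_congr rfl fun t _ => by rw [pmass_snd q F G t]
  have hLHS : ent q (fun x => (F x, G x)) - ent q G = ∑ t, phi (fun s => r (s, t)) := by
    rw [ent_pair_eq q F G, hG, ← Finset.sum_sub_distrib]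
    rfl
  have hhG : ent q (fun x => h (G x))
      = ∑ u', Real.negMulLog (∑ s, ∑ t ∈ univ.filter (fun t => h t = u'), r (s, t)) := by
    rw [ent]
    refine Finset.sum_congr rfl fun u' _ => ?_
    rw [pmass_comp q G h u']
    congr 1
    calc ∑ t ∈ univ.filter (fun t => h t = u'), pmass q G t
        = ∑ t ∈ univ.filter (fun t => h t = u'), ∑ s, r (s, t) :=
          Finset.sum_congr rfl fun t _ => pmass_snd q F G t
      _ = ∑ s, ∑ t ∈ univ.filter (fun t => h t = u'), r (s, t) := Finset.sum_comm
  have hpairh : ent q (fun x => (F x, h (G x)))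
      = ∑ u', ∑ s, Real.negMulLog (∑ t ∈ univ.filter (fun t => h t = u'), r (s, t)) := by
    rw [ent_pair_eq q F (fun x => h (G x))]
    exact Finset.sum_congr rfl fun u' _ => Finset.sum_congr rfl fun s _ => by
      rw [pmass_map_snd q F G h s u']
  have hRHS : ent q (fun x => (F x, h (G x))) - ent q (fun x => h (G x))
      = ∑ u', phi (fun s => ∑ t ∈ univ.filter (fun t => h t = u'), r (s, t)) := by
    rw [hpairh, hhG, ← Finset.sum_sub_distrib]
    rfl
  rw [hLHS, hRHS]
  calc ∑ t, phi (fun s => r (s, t))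
      = ∑ u', ∑ t ∈ univ.filter (fun t => h t = u'), phi (fun s => r (s, t)) :=
        (Finset.sum_fiberwise univ h (fun t => phi (fun s => r (s, t)))).symm
    _ ≤ ∑ u', phi (fun s => ∑ t ∈ univ.filter (fun t => h t = u'), r (s, t)) :=
        Finset.sum_le_sum fun u' _ =>
          phi_sum_le _ (fun t s => r (s, t)) (fun t _ s => hr0 (s, t))

lemma negMulLog_eq_mul_log (p : ℝ) : Real.negMulLog p = p * Real.log (1 / p) := by
  rw [one_div, Real.log_inv, Real.negMulLog]; ring

lemma ent_le_log_card {T : Type*} [Fintype T] [DecidableEq T] (q : V → ℝ)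
    (hq : ∀ x, 0 ≤ q x) (hq1 : ∑ x, q x = 1) (F : V → T) :
    ent q F ≤ Real.log (Fintype.card T) := by
  have h := sum_mul_log_div_le univ (pmass q F) (fun _ => (1 : ℝ))
    (fun t _ => pmass_nonneg hq F t) (fun t _ => zero_le_one)
    (fun t _ h1 => absurd h1 one_ne_zero)
  rw [sum_pmass, hq1] at h
  simp only [Finset.sum_const, Finset.card_univ, nsmul_eq_mul, mul_one] at h
  rw [ent]
  calc ∑ t, Real.negMulLog (pmass q F t)
      = ∑ t, pmass q F t * Real.log (1 / pmass q F t) :=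
        Finset.sum_congr rfl fun t _ => negMulLog_eq_mul_log _
    _ ≤ 1 * Real.log ((Fintype.card T : ℝ) / 1) := h
    _ = Real.log (Fintype.card T) := by rw [one_mul, div_one]

lemma sum_prod_pmf {𝒳 : Type*} [Fintype 𝒳] (p : 𝒳 → ℝ) (hp1 : ∑ a, p a = 1) (m : ℕ) :
    ∑ y : Fin m → 𝒳, ∏ i, p (y i) = 1 := by
  classical
  rw [← Fintype.prod_sum (fun (_ : Fin m) (a : 𝒳) => p a)]
  simp [hp1]

lemma sum_negMulLog_prod {𝒳 : Type*} [Fintype 𝒳] (p : 𝒳 → ℝ) (hp1 : ∑ a, p a = 1)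
    (m : ℕ) : ∑ x : Fin m → 𝒳, Real.negMulLog (∏ i, p (x i))
      = m * ∑ a, Real.negMulLog (p a) := by
  induction m with
  | zero =>
    have h0 : ∀ x : Fin 0 → 𝒳, Real.negMulLog (∏ i, p (x i)) = 0 := fun x => by simp
    rw [Finset.sum_congr rfl fun x _ => h0 x]
    simp
  | succ m ih =>
    have hEq := Equiv.sum_comp (Fin.consEquiv (fun _ : Fin (m + 1) => 𝒳))
      (fun x => Real.negMulLog (∏ i, p (x i)))
    rw [← hEq, Fintype.sum_prod_type]
    have hc : ∀ (a : 𝒳) (y : Fin m → 𝒳),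
        (∏ i, p ((Fin.consEquiv (fun _ : Fin (m + 1) => 𝒳)) (a, y) i))
          = p a * ∏ i, p (y i) := by
      intro a y
      simp [Fin.prod_univ_succ]
    have step : ∀ a : 𝒳,
        ∑ y : Fin m → 𝒳,
            Real.negMulLog (∏ i, p ((Fin.consEquiv (fun _ : Fin (m + 1) => 𝒳)) (a, y) i))
          = Real.negMulLog (p a) + p a * (m * ∑ b, Real.negMulLog (p b)) := by
      intro a
      calc ∑ y : Fin m → 𝒳,
            Real.negMulLog (∏ i, p ((Fin.consEquiv (fun _ : Fin (m + 1) => 𝒳)) (a, y) i))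
          = ∑ y : Fin m → 𝒳, ((∏ i, p (y i)) * Real.negMulLog (p a)
              + p a * Real.negMulLog (∏ i, p (y i))) := by
            refine Finset.sum_congr rfl fun y _ => ?_
            rw [hc a y, Real.negMulLog_mul]
        _ = (∑ y : Fin m → 𝒳, ∏ i, p (y i)) * Real.negMulLog (p a)
              + p a * ∑ y : Fin m → 𝒳, Real.negMulLog (∏ i, p (y i)) := by
            rw [Finset.sum_add_distrib, ← Finset.sum_mul, ← Finset.mul_sum]
        _ = Real.negMulLog (p a) + p a * (m * ∑ b, Real.negMulLog (p b)) := by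
            rw [sum_prod_pmf p hp1 m, ih, one_mul]
    rw [Finset.sum_congr rfl fun a _ => step a, Finset.sum_add_distrib, ← Finset.sum_mul, hp1]
    push_cast
    ring



end FFAux


/-- Shannon entropy (in nats) of a finitely-valued random variable `X` under the
measure `μ`: `H[X] = −Σ_s P[X = s] log P[X = s]`. -/
noncomputable def shannonEntropy {Ω S : Type*} [MeasurableSpace Ω] [Fintype S]
    (μ : Measure Ω) (X : Ω → S) : ℝ :=
  ∑ s : S, Real.negMulLog (μ (X ⁻¹' {s})).toReal

/-- Conditional Shannon entropy (in nats): `H[X | Y] = H[X, Y] − H[Y]`. -/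
noncomputable def condEntropy {Ω S T : Type*} [MeasurableSpace Ω] [Fintype S] [Fintype T]
    (μ : Measure Ω) (X : Ω → S) (Y : Ω → T) : ℝ :=
  shannonEntropy μ (fun ω => (X ω, Y ω)) - shannonEntropy μ Y

/-- Mutual information (in nats): `I[X ; Y] = H[X] − H[X | Y]`. -/
noncomputable def mutualInfo {Ω S T : Type*} [MeasurableSpace Ω] [Fintype S] [Fintype T]
    (μ : Measure Ω) (X : Ω → S) (Y : Ω → T) : ℝ :=
  shannonEntropy μ X - condEntropy μ X Y

/-- Conditional mutual information (in nats):
`I[X ; Y | Z] = H[X | Z] − H[X | Y, Z]`. -/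
noncomputable def condMutualInfo {Ω S T U : Type*} [MeasurableSpace Ω] [Fintype S] [Fintype T] [Fintype U]
    (μ : Measure Ω) (X : Ω → S) (Y : Ω → T) (Z : Ω → U) : ℝ :=
  condEntropy μ X Z - condEntropy μ X (fun ω => (Y ω, Z ω))


/-- `Option`-encoded prefix of length `k` of a tuple. -/
def FFAux.pre {𝒳 : Type*} (n k : ℕ) (x : Fin n → 𝒳) : Fin n → Option 𝒳 :=
  fun j => if j.val < k then some (x j) else none

set_option maxHeartbeats 1600000 in
/-- Per-letter converse bound for feedforward source coding: for an i.i.d.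
source `X₁,…,Xₙ` with per-letter pmf `p`, an encoder `e` into `Fin N`, and
unit-lag feedforward decoders `gᵢ` producing `X̂ᵢ = gᵢ(M, X₁,…,X_{i−1})` from the
message `M = e(X₁,…,Xₙ)`, one has `log N ≥ Σᵢ (H[Xᵢ] − H[Xᵢ | X̂ᵢ])`,
i.e. `log N ≥ Σᵢ I[Xᵢ ; X̂ᵢ]`. -/
theorem feedforward_sum_mutualInfo_le_log
    {𝒳 𝒳' : Type} [Fintype 𝒳] [Fintype 𝒳'] [Nonempty 𝒳] [Nonempty 𝒳']
    (p : 𝒳 → ℝ) (hp0 : ∀ a, 0 ≤ p a) (hp1 : ∑ a, p a = 1)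
    {Ω : Type} [MeasurableSpace Ω] (μ : Measure Ω) [IsProbabilityMeasure μ]
    (n N : ℕ) (X : Fin n → Ω → 𝒳)
    (hXmeas : ∀ i a, MeasurableSet ((X i) ⁻¹' {a}))
    (hiid : ∀ x : Fin n → 𝒳,
      (μ {ω | ∀ i, X i ω = x i}).toReal = ∏ i, p (x i))
    (e : (Fin n → 𝒳) → Fin N)
    (g : (i : Fin n) → Fin N → (Fin i.val → 𝒳) → 𝒳')
    (Xhat : Fin n → Ω → 𝒳')
    (hXhat : ∀ i ω, Xhat i ω =
      g i (e (fun j => X j ω)) (fun j => X ⟨j.val, j.isLt.trans i.isLt⟩ ω)) :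
    ∑ i : Fin n, (shannonEntropy μ (X i) - condEntropy μ (X i) (Xhat i))
      ≤ Real.log N := by
  classical
  set q : (Fin n → 𝒳) → ℝ := fun x => ∏ i, p (x i) with hq_def
  have hq0 : ∀ x, 0 ≤ q x := fun x => Finset.prod_nonneg fun i _ => hp0 _
  have hq1 : ∑ x, q x = 1 := by
    rw [hq_def]; exact FFAux.sum_prod_pmf p hp1 n
  -- Bridge from measure-theoretic entropy to combinatorial entropy
  have key : ∀ {T : Type} [Fintype T] [DecidableEq T] (F : (Fin n → 𝒳) → T) (t : T),
      (μ ((fun ω => F (fun i => X i ω)) ⁻¹' {t})).toReal = FFAux.pmass q F t := by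
    intro T _ _ F t
    have hmeas : ∀ x : Fin n → 𝒳, MeasurableSet {ω | ∀ i, X i ω = x i} := by
      intro x
      have hE : {ω | ∀ i, X i ω = x i} = ⋂ i, (X i) ⁻¹' {x i} := by
        ext ω; simp [Set.mem_iInter]
      rw [hE]
      exact MeasurableSet.iInter fun i => hXmeas i (x i)
    have hset : (fun ω => F (fun i => X i ω)) ⁻¹' {t}
        = ⋃ x ∈ (Finset.univ.filter (fun x => F x = t) : Finset (Fin n → 𝒳)),
            {ω | ∀ i, X i ω = x i} := by
      ext ω
      simp only [Set.mem_preimage, Set.mem_singleton_iff, Set.mem_iUnion,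
        Finset.mem_filter, Finset.mem_univ, true_and, Set.mem_setOf_eq, exists_prop]
      constructor
      · intro hω
        exact ⟨fun i => X i ω, hω, fun i => rfl⟩
      · rintro ⟨x, hFx, hx⟩
        have hxeq : (fun i => X i ω) = x := funext hx
        rw [hxeq]; exact hFx
    have hdisj : (↑(Finset.univ.filter (fun x => F x = t)) : Set (Fin n → 𝒳)).PairwiseDisjoint
        (fun x => {ω | ∀ i, X i ω = x i}) := by
      intro x _ y _ hxy
      exact Set.disjoint_left.2 fun ω h1 h2 => hxy (funext fun i => (h1 i).symm.trans (h2 i))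
    rw [hset, measure_biUnion_finset hdisj (fun x _ => hmeas x),
      ENNReal.toReal_sum (fun x _ => measure_ne_top μ _), FFAux.pmass]
    exact Finset.sum_congr rfl fun x _ => hiid x
  have bridge : ∀ {T : Type} [Fintype T] [DecidableEq T] (F : (Fin n → 𝒳) → T),
      shannonEntropy μ (fun ω => F (fun i => X i ω)) = FFAux.ent q F := by
    intro T _ _ F
    rw [shannonEntropy, FFAux.ent]
    exact Finset.sum_congr rfl fun t _ => by rw [key F t]
  -- marginal of a single letter
  have hpm_eval : ∀ (i : Fin n) (a : 𝒳), FFAux.pmass q (fun x => x i) a = p a := by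
    intro i a
    rw [FFAux.pmass, Finset.sum_filter]
    have hterm : ∀ x : Fin n → 𝒳, (if x i = a then q x else 0)
        = ∏ j, (if j = i then (if x j = a then p (x j) else 0) else p (x j)) := by
      intro x
      by_cases hx : x i = a
      · rw [if_pos hx, hq_def]
        refine Finset.prod_congr rfl fun j _ => ?_
        by_cases hj : j = i
        · rw [if_pos hj, hj, if_pos hx]
        · rw [if_neg hj]
      · rw [if_neg hx]
        symm
        apply Finset.prod_eq_zero (Finset.mem_univ i)
        rw [if_pos rfl, if_neg hx]
    rw [Finset.sum_congr rfl fun x _ => hterm x,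
      ← Fintype.prod_sum (fun (j : Fin n) (b : 𝒳) =>
        if j = i then (if b = a then p b else 0) else p b)]
    have hfac : ∀ j : Fin n,
        (∑ bb : 𝒳, if j = i then (if bb = a then p bb else 0) else p bb)
          = if j = i then p a else 1 := by
      intro j
      by_cases hj : j = i
      · simp only [hj, eq_self_iff_true, if_true]
        rw [Fintype.sum_ite_eq' a p]
      · simp only [if_neg hj]
        exact hp1
    rw [Finset.prod_congr rfl fun j _ => hfac j, Fintype.prod_ite_eq' i (fun _ => p a)]
  have hXi : ∀ i : Fin n, shannonEntropy μ (X i) = ∑ a, Real.negMulLog (p a) := by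
    intro i
    calc shannonEntropy μ (X i) = FFAux.ent q (fun x => x i) := bridge (fun x => x i)
      _ = ∑ a, Real.negMulLog (p a) := by
          rw [FFAux.ent]
          exact Finset.sum_congr rfl fun a _ => by rw [hpm_eval i a]
  -- conditional entropy in combinatorial form
  have hcond : ∀ i : Fin n, condEntropy μ (X i) (Xhat i)
      = FFAux.ent q (fun x => (x i, g i (e x) (fun j => x ⟨j.val, j.isLt.trans i.isLt⟩)))
        - FFAux.ent q (fun x => g i (e x) (fun j => x ⟨j.val, j.isLt.trans i.isLt⟩)) := by
    intro i
    have hXhat_fun : Xhat i = fun ω =>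
        (fun x => g i (e x) (fun j => x ⟨j.val, j.isLt.trans i.isLt⟩)) (fun i' => X i' ω) :=
      funext fun ω => hXhat i ω
    simp only [condEntropy]
    congr 1
    · have hpf : (fun ω => (X i ω, Xhat i ω)) = fun ω =>
          (fun x => (x i, g i (e x) (fun j => x ⟨j.val, j.isLt.trans i.isLt⟩)))
            (fun i' => X i' ω) := by
        funext ω
        rw [hXhat i ω]
      rw [hpf]
      exact bridge (fun x => (x i, g i (e x) (fun j => x ⟨j.val, j.isLt.trans i.isLt⟩)))
    · rw [hXhat_fun]
      exact bridge (fun x => g i (e x) (fun j => x ⟨j.val, j.isLt.trans i.isLt⟩))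
  -- data processing inequality
  have hdpi : ∀ i : Fin n,
      FFAux.ent q (fun x => (x i, (e x, FFAux.pre n i.val x)))
        - FFAux.ent q (fun x => (e x, FFAux.pre n i.val x))
      ≤ FFAux.ent q (fun x => (x i, g i (e x) (fun j => x ⟨j.val, j.isLt.trans i.isLt⟩)))
        - FFAux.ent q (fun x => g i (e x) (fun j => x ⟨j.val, j.isLt.trans i.isLt⟩)) := by
    intro i
    have hg : ∀ x : Fin n → 𝒳,
        g i (e x) (fun j => ((FFAux.pre n i.val x) ⟨j.val, j.isLt.trans i.isLt⟩).getD
            (Classical.arbitrary 𝒳))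
          = g i (e x) (fun j => x ⟨j.val, j.isLt.trans i.isLt⟩) := by
      intro x
      congr 1
      funext j
      show ((if (⟨j.val, j.isLt.trans i.isLt⟩ : Fin n).val < i.val
          then some (x ⟨j.val, j.isLt.trans i.isLt⟩) else none)).getD (Classical.arbitrary 𝒳)
        = x ⟨j.val, j.isLt.trans i.isLt⟩
      rw [if_pos (show (⟨j.val, j.isLt.trans i.isLt⟩ : Fin n).val < i.val from j.isLt)]
      rfl
    have h := FFAux.condEnt_le_condEnt_comp q hq0 (fun x : Fin n → 𝒳 => x i)
      (fun x => (e x, FFAux.pre n i.val x))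
      (fun mv : Fin N × (Fin n → Option 𝒳) =>
        g i mv.1 (fun j => (mv.2 ⟨j.val, j.isLt.trans i.isLt⟩).getD (Classical.arbitrary 𝒳)))
    calc FFAux.ent q (fun x => (x i, (e x, FFAux.pre n i.val x)))
          - FFAux.ent q (fun x => (e x, FFAux.pre n i.val x))
        ≤ FFAux.ent q (fun x => (x i,
              g i (e x) (fun j => ((FFAux.pre n i.val x) ⟨j.val, j.isLt.trans i.isLt⟩).getD
                (Classical.arbitrary 𝒳))))
            - FFAux.ent q (fun x =>
              g i (e x) (fun j => ((FFAux.pre n i.val x) ⟨j.val, j.isLt.trans i.isLt⟩).getD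
                (Classical.arbitrary 𝒳))) := h
      _ = FFAux.ent q (fun x => (x i, g i (e x) (fun j => x ⟨j.val, j.isLt.trans i.isLt⟩)))
            - FFAux.ent q (fun x => g i (e x) (fun j => x ⟨j.val, j.isLt.trans i.isLt⟩)) := by
          have h1 : (fun x : Fin n → 𝒳 => (x i,
              g i (e x) (fun j => ((FFAux.pre n i.val x) ⟨j.val, j.isLt.trans i.isLt⟩).getD
                (Classical.arbitrary 𝒳))))
              = fun x => (x i, g i (e x) (fun j => x ⟨j.val, j.isLt.trans i.isLt⟩)) :=
            funext fun x => by rw [hg x]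
          have h2 : (fun x : Fin n → 𝒳 =>
              g i (e x) (fun j => ((FFAux.pre n i.val x) ⟨j.val, j.isLt.trans i.isLt⟩).getD
                (Classical.arbitrary 𝒳)))
              = fun x => g i (e x) (fun j => x ⟨j.val, j.isLt.trans i.isLt⟩) :=
            funext fun x => hg x
          rw [h1, h2]
  -- chain-rule recoding step
  have hstep : ∀ i : Fin n,
      FFAux.ent q (fun x => (x i, (e x, FFAux.pre n i.val x)))
        = FFAux.ent q (fun x => (e x, FFAux.pre n (i.val + 1) x)) := by
    intro i
    have hinj : Set.InjOn (fun z : 𝒳 × (Fin N × (Fin n → Option 𝒳)) =>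
        (z.2.1, Function.update z.2.2 i (some z.1)))
        (Set.range (fun x : Fin n → 𝒳 => (x i, (e x, FFAux.pre n i.val x)))) := by
      rintro _ ⟨x, rfl⟩ _ ⟨y, rfl⟩ hxy
      have hxy' : ((e x : Fin N), Function.update (FFAux.pre n i.val x) i (some (x i)))
          = (e y, Function.update (FFAux.pre n i.val y) i (some (y i))) := hxy
      have he : e x = e y := congrArg Prod.fst hxy'
      have hupd : Function.update (FFAux.pre n i.val x) i (some (x i))
          = Function.update (FFAux.pre n i.val y) i (some (y i)) := congrArg Prod.snd hxy'
      have hxi : x i = y i := by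
        have hi := congrFun hupd i
        rw [Function.update_self, Function.update_self] at hi
        exact Option.some.inj hi
      have hpre : FFAux.pre n i.val x = FFAux.pre n i.val y := by
        funext j
        by_cases hj : j = i
        · show (if j.val < i.val then some (x j) else none)
            = (if j.val < i.val then some (y j) else none)
          rw [hj, if_neg (lt_irrefl _), if_neg (lt_irrefl _)]
        · have hj' := congrFun hupd j
          rw [Function.update_of_ne hj, Function.update_of_ne hj] at hj'
          exact hj'
      show (x i, (e x, FFAux.pre n i.val x)) = (y i, (e y, FFAux.pre n i.val y))
      rw [hxi, he, hpre]
    have hfun : (fun x : Fin n → 𝒳 =>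
        ((e x : Fin N), Function.update (FFAux.pre n i.val x) i (some (x i))))
        = fun x => (e x, FFAux.pre n (i.val + 1) x) := by
      funext x
      congr 1
      funext j
      by_cases hj : j = i
      · rw [hj, Function.update_self]
        show _ = (if (i.val : ℕ) < i.val + 1 then some (x i) else none)
        rw [if_pos (Nat.lt_succ_self _)]
      · rw [Function.update_of_ne hj]
        show (if (j.val : ℕ) < i.val then some (x j) else none)
          = (if (j.val : ℕ) < i.val + 1 then some (x j) else none)
        have hne : (j.val : ℕ) ≠ i.val := fun hc => hj (Fin.ext hc)
        by_cases hlt : (j.val : ℕ) < i.val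
        · rw [if_pos hlt, if_pos (Nat.lt_succ_of_lt hlt)]
        · rw [if_neg hlt, if_neg (fun hc =>
            hlt (lt_of_le_of_ne (Nat.lt_succ_iff.1 hc) hne))]
    calc FFAux.ent q (fun x => (x i, (e x, FFAux.pre n i.val x)))
        = FFAux.ent q (fun x : Fin n → 𝒳 =>
            ((e x : Fin N), Function.update (FFAux.pre n i.val x) i (some (x i)))) :=
          (FFAux.ent_comp_of_injOn q _ _ hinj).symm
      _ = FFAux.ent q (fun x => (e x, FFAux.pre n (i.val + 1) x)) := by rw [hfun]
  -- endpoints of the telescoping sum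
  have hb0 : FFAux.ent q (fun x => (e x, FFAux.pre n 0 x)) = FFAux.ent q e := by
    have hinj : Set.InjOn (fun m : Fin N => (m, (fun _ : Fin n => (none : Option 𝒳))))
        (Set.range e) := fun m1 _ m2 _ hmm => congrArg Prod.fst hmm
    have hcomp : (fun x : Fin n → 𝒳 => (e x, FFAux.pre n 0 x))
        = fun x => (fun m : Fin N => (m, (fun _ : Fin n => (none : Option 𝒳)))) (e x) := by
      funext x
      show ((e x : Fin N), FFAux.pre n 0 x) = (e x, fun _ : Fin n => (none : Option 𝒳))
      have hz : FFAux.pre n 0 x = fun _ : Fin n => (none : Option 𝒳) := by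
        funext j
        show (if (j.val : ℕ) < 0 then some (x j) else none) = none
        rw [if_neg (Nat.not_lt_zero _)]
      rw [hz]
    rw [hcomp]
    exact FFAux.ent_comp_of_injOn q e
      (fun m : Fin N => (m, (fun _ : Fin n => (none : Option 𝒳)))) hinj
  have hbn : FFAux.ent q (fun x => (e x, FFAux.pre n n x))
      = ∑ x : Fin n → 𝒳, Real.negMulLog (q x) := by
    have hinj : Set.InjOn (fun y : Fin n → 𝒳 => ((e y : Fin N), fun j : Fin n => (some (y j) : Option 𝒳)))
        (Set.range (fun x : Fin n → 𝒳 => x)) := by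
      intro x _ y _ hxy
      have hsnd : (fun j : Fin n => (some (x j) : Option 𝒳))
          = (fun j : Fin n => (some (y j) : Option 𝒳)) := congrArg Prod.snd hxy
      funext j
      exact Option.some.inj (congrFun hsnd j)
    have hid : FFAux.ent q (fun x : Fin n → 𝒳 => x)
        = ∑ x : Fin n → 𝒳, Real.negMulLog (q x) := by
      rw [FFAux.ent]
      refine Finset.sum_congr rfl fun t _ => ?_
      congr 1
      rw [FFAux.pmass]
      simp only [Finset.sum_filter]
      exact Fintype.sum_ite_eq' t q
    have hcomp : (fun x : Fin n → 𝒳 => (e x, FFAux.pre n n x))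
        = fun x => (fun y : Fin n → 𝒳 => ((e y : Fin N), fun j : Fin n => (some (y j) : Option 𝒳)))
            ((fun x : Fin n → 𝒳 => x) x) := by
      funext x
      show ((e x : Fin N), FFAux.pre n n x) = (e x, fun j : Fin n => (some (x j) : Option 𝒳))
      have hz : FFAux.pre n n x = fun j : Fin n => (some (x j) : Option 𝒳) := by
        funext j
        show (if (j.val : ℕ) < n then some (x j) else none) = some (x j)
        rw [if_pos j.isLt]
      rw [hz]
    rw [hcomp, FFAux.ent_comp_of_injOn q (fun x : Fin n → 𝒳 => x)
      (fun y : Fin n → 𝒳 => ((e y : Fin N), fun j : Fin n => (some (y j) : Option 𝒳))) hinj]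
    exact hid
  have hqsum : ∑ x : Fin n → 𝒳, Real.negMulLog (q x) = n * ∑ a, Real.negMulLog (p a) := by
    rw [hq_def]
    exact FFAux.sum_negMulLog_prod p hp1 n
  have htel : ∑ i ∈ Finset.range n,
      (FFAux.ent q (fun x => (e x, FFAux.pre n (i + 1) x))
        - FFAux.ent q (fun x => (e x, FFAux.pre n i x)))
      = FFAux.ent q (fun x => (e x, FFAux.pre n n x))
        - FFAux.ent q (fun x => (e x, FFAux.pre n 0 x)) :=
    Finset.sum_range_sub (fun k => FFAux.ent q (fun x => (e x, FFAux.pre n k x))) n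
  have hper : ∀ i : Fin n,
      shannonEntropy μ (X i) - condEntropy μ (X i) (Xhat i)
        ≤ (∑ a, Real.negMulLog (p a))
          - (FFAux.ent q (fun x => (e x, FFAux.pre n (i.val + 1) x))
             - FFAux.ent q (fun x => (e x, FFAux.pre n i.val x))) := by
    intro i
    rw [hXi i, hcond i]
    linarith [hdpi i, hstep i]
  calc ∑ i : Fin n, (shannonEntropy μ (X i) - condEntropy μ (X i) (Xhat i))
      ≤ ∑ i : Fin n, ((∑ a, Real.negMulLog (p a))
          - (FFAux.ent q (fun x => (e x, FFAux.pre n (i.val + 1) x))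
             - FFAux.ent q (fun x => (e x, FFAux.pre n i.val x)))) :=
        Finset.sum_le_sum fun i _ => hper i
    _ = n * (∑ a, Real.negMulLog (p a))
          - ∑ i ∈ Finset.range n,
            (FFAux.ent q (fun x => (e x, FFAux.pre n (i + 1) x))
             - FFAux.ent q (fun x => (e x, FFAux.pre n i x))) := by
        rw [Finset.sum_sub_distrib, Finset.sum_const, Finset.card_univ, Fintype.card_fin,
          nsmul_eq_mul]
        congr 1
        rw [Finset.sum_range (fun k => FFAux.ent q (fun x => (e x, FFAux.pre n (k + 1) x))
            - FFAux.ent q (fun x => (e x, FFAux.pre n k x)))]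
    _ = n * (∑ a, Real.negMulLog (p a))
          - (FFAux.ent q (fun x => (e x, FFAux.pre n n x))
             - FFAux.ent q (fun x => (e x, FFAux.pre n 0 x))) := by rw [htel]
    _ = FFAux.ent q e := by
        rw [hbn, hqsum, hb0]
        ring
    _ ≤ Real.log (Fintype.card (Fin N)) := FFAux.ent_le_log_card q hq0 hq1 e
    _ = Real.log N := by rw [Fintype.card_fin]
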